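/- Let {f_1, ..., f_n} be a d-sequence in a commutative ring A and let I = ⟨f_1, ..., f_n⟩. Then for all s ≥ 1 and all 1 ≤ i ≤ n, the colon ideal (⟨f_1, ..., f_{i-1}⟩ + I^s : f_i) equals (⟨f_1, ..., f_{i-1}⟩ : f_i) + I^{s-1}. -/

import Mathlib

open Ideal

/-- A sequence `f 0, …, f (n-1)` is a *d-sequence* in `A` if
`(⟨f_0,…,f_{i-1}⟩ : f_i) ∩ ⟨f_0,…,f_{n-1}⟩ = ⟨f_0,…,f_{i-1}⟩` for every `i`. -/
def IsDSequence {A : Type*} [CommRing A] {n : ℕ} (f : Fin n → A) : Prop :=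
  ∀ i : Fin n,
    (Ideal.span (f '' {j | j < i})).colon (Ideal.span {f i}) ⊓ Ideal.span (Set.range f)
      = Ideal.span (f '' {j | j < i})


namespace DSeqAux
variable {A : Type*} [CommRing A] {n : ℕ}

def K (f : Fin n → A) (t : ℕ) : Ideal A := Ideal.span (f '' {j | (j : ℕ) < t})

def II (f : Fin n → A) : Ideal A := Ideal.span (Set.range f)

lemma J_eq (f : Fin n → A) (i : Fin n) :
    Ideal.span (f '' {j | j < i}) = K f (i : ℕ) := rfl

lemma K_zero (f : Fin n → A) : K f 0 = ⊥ := by simp [K]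

lemma K_mono (f : Fin n → A) {a b : ℕ} (h : a ≤ b) : K f a ≤ K f b :=
  Ideal.span_mono (Set.image_mono fun j hj => lt_of_lt_of_le hj h)

lemma K_le (f : Fin n → A) (t : ℕ) : K f t ≤ II f :=
  Ideal.span_mono ((Set.image_subset_range f _).trans le_rfl)

lemma K_top (f : Fin n → A) : K f n = II f := by
  unfold K II
  have : {j : Fin n | (j : ℕ) < n} = Set.univ := by
    ext j; simp [j.isLt]
  rw [this, Set.image_univ]

lemma mem_K (f : Fin n → A) {t : ℕ} (i : Fin n) (h : (i : ℕ) < t) : f i ∈ K f t :=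
  Ideal.subset_span ⟨i, h, rfl⟩

lemma K_succ (f : Fin n → A) (t : ℕ) (h : t < n) :
    K f (t + 1) = K f t + Ideal.span {f ⟨t, h⟩} := by
  unfold K
  have hset : {j : Fin n | (j : ℕ) < t + 1} = {j : Fin n | (j : ℕ) < t} ∪ {⟨t, h⟩} := by
    ext j
    simp only [Set.mem_setOf_eq, Set.mem_union, Set.mem_singleton_iff, Fin.ext_iff,
      Nat.lt_succ_iff_lt_or_eq]
  have hs : (f '' {j | (j : ℕ) < t + 1}) = f '' {j | (j : ℕ) < t} ∪ {f ⟨t, h⟩} := by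
    rw [hset, Set.image_union, Set.image_singleton]
  rw [hs, Ideal.span_union, Ideal.add_eq_sup]

lemma hf_eq (f : Fin n → A) (hf : IsDSequence f) (t : ℕ) (ht : t < n) :
    (K f t).colon (Ideal.span {f ⟨t, ht⟩}) ⊓ II f = K f t := hf ⟨t, ht⟩

lemma statB (f : Fin n → A) (hf : IsDSequence f) (s : ℕ)
    (hA : ∀ (t : ℕ) (ht : t < n),
      (K f t + II f ^ (s + 1)).colon (Ideal.span {f ⟨t, ht⟩})
        = (K f t).colon (Ideal.span {f ⟨t, ht⟩}) + II f ^ s)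
    (m : ℕ) (hm : m < n) :
    (K f m).colon (Ideal.span {f ⟨m, hm⟩}) ⊓ II f ^ (s + 1) = K f m * II f ^ s := by
  have hKmI : K f m * II f ^ s ≤ II f ^ (s + 1) := by
    rw [pow_succ]
    calc K f m * II f ^ s = II f ^ s * K f m := mul_comm _ _
      _ ≤ II f ^ s * II f := Ideal.mul_mono le_rfl (K_le f m)
  apply le_antisymm
  · intro x hx
    obtain ⟨hx1, hx2⟩ := Submodule.mem_inf.mp hx
    have hxK : x ∈ K f m := by
      rw [← hf_eq f hf m hm]
      exact Submodule.mem_inf.mpr ⟨hx1, Ideal.pow_le_self (Nat.succ_ne_zero s) hx2⟩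
    have key : ∀ t : ℕ, t ≤ m → x ∈ K f m * II f ^ s ⊔ K f t → x ∈ K f m * II f ^ s := by
      intro t
      induction t with
      | zero => intro _ hx'; rwa [K_zero, sup_bot_eq] at hx'
      | succ t iht =>
        intro htm hx'
        have htm' : t < m := Nat.lt_of_succ_le htm
        have htn : t < n := htm'.trans hm
        rw [K_succ f t htn, Ideal.add_eq_sup, ← sup_assoc] at hx'
        obtain ⟨y, hy, z, hz, hyz⟩ := Submodule.mem_sup.mp hx'
        obtain ⟨a, ha⟩ := Ideal.mem_span_singleton'.mp hz
        have hy' : y ∈ K f t ⊔ II f ^ (s + 1) :=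
          (sup_le (hKmI.trans le_sup_right) le_sup_left) hy
        have haf : a * f ⟨t, htn⟩ ∈ K f t + II f ^ (s + 1) := by
          rw [Ideal.add_eq_sup]
          have hz' : a * f ⟨t, htn⟩ = x - y := by
            rw [ha]; exact (eq_sub_of_add_eq' hyz)
          rw [hz']
          exact sub_mem (Submodule.mem_sup_right hx2) hy'
        have ha2 := Ideal.mem_colon_span_singleton.mpr haf
        rw [hA t htn, Ideal.add_eq_sup] at ha2
        obtain ⟨u, hu, v, hv, huv⟩ := Submodule.mem_sup.mp ha2
        apply iht (Nat.le_of_succ_le htm)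
        have hx'' : x = y + (u * f ⟨t, htn⟩ + v * f ⟨t, htn⟩) := by
          rw [← add_mul, huv, ha, hyz]
        rw [hx'']
        refine Submodule.add_mem _ hy (Submodule.add_mem _ ?_ ?_)
        · exact Submodule.mem_sup_right (Ideal.mem_colon_span_singleton.mp hu)
        · refine Submodule.mem_sup_left ?_
          rw [mul_comm v (f ⟨t, htn⟩)]
          exact Ideal.mul_mem_mul (mem_K f ⟨t, htn⟩ htm') hv
    exact key m le_rfl (Submodule.mem_sup_right hxK)
  · refine le_inf ?_ hKmI
    intro x hx
    exact Ideal.mem_colon_span_singleton.mpr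
      (Ideal.mul_mem_right _ _ (Ideal.mul_le_left hx))

end DSeqAux

namespace DSeqAux2
open DSeqAux
variable {A : Type*} [CommRing A] {n : ℕ}

lemma statA (f : Fin n → A) (hf : IsDSequence f) :
    ∀ (s t : ℕ) (ht : t < n),
      (K f t + II f ^ (s + 1)).colon (Ideal.span {f ⟨t, ht⟩})
        = (K f t).colon (Ideal.span {f ⟨t, ht⟩}) + II f ^ s := by
  intro s
  induction s with
  | zero =>
    intro t ht
    have h2 : (K f t).colon (Ideal.span {f ⟨t, ht⟩}) + II f ^ 0 = ⊤ := by
      rw [pow_zero, Ideal.one_eq_top, Ideal.add_eq_sup, sup_top_eq]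
    rw [h2, eq_top_iff]
    intro x _
    refine Ideal.mem_colon_span_singleton.mpr ?_
    rw [Ideal.add_eq_sup]
    refine Submodule.mem_sup_right ?_
    rw [zero_add, pow_one]
    exact Ideal.mul_mem_left _ x (Ideal.subset_span (Set.mem_range_self _))
  | succ s ih =>
    have hB := statB f hf s ih
    intro i hi
    have hspanI : Ideal.span {f ⟨i, hi⟩} ≤ II f :=
      Ideal.span_le.mpr (Set.singleton_subset_iff.mpr
        (Ideal.subset_span (Set.mem_range_self _)))
    apply le_antisymm
    · intro x hx
      have hx1 : x * f ⟨i, hi⟩ ∈ K f i ⊔ II f ^ (s + 1 + 1) := by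
        rw [← Ideal.add_eq_sup]; exact Ideal.mem_colon_span_singleton.mp hx
      have hx2 : x * f ⟨i, hi⟩ ∈ K f i + II f ^ (s + 1) := by
        rw [Ideal.add_eq_sup]
        exact (sup_le_sup_left (Ideal.pow_le_pow_right (Nat.le_succ _)) _ :
            K f i ⊔ II f ^ (s + 1 + 1) ≤ K f i ⊔ II f ^ (s + 1)) hx1
      have hcol := Ideal.mem_colon_span_singleton.mpr hx2
      rw [ih i hi, Ideal.add_eq_sup] at hcol
      obtain ⟨a, hac, b, hb, hab⟩ := Submodule.mem_sup.mp hcol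
      have hbf : b * f ⟨i, hi⟩ ∈ K f i ⊔ II f ^ (s + 1 + 1) := by
        have hb' : b * f ⟨i, hi⟩ = x * f ⟨i, hi⟩ - a * f ⟨i, hi⟩ := by
          rw [← sub_mul]
          congr 1
          exact (eq_sub_of_add_eq' hab)
        rw [hb']
        exact sub_mem hx1 (Submodule.mem_sup_left (Ideal.mem_colon_span_singleton.mp hac))
      have elim : ∀ t : ℕ, i < t → t ≤ n →
          b * f ⟨i, hi⟩ ∈ (K f i ⊔ Ideal.span {f ⟨i, hi⟩} * II f ^ (s + 1))
              ⊔ K f t * II f ^ (s + 1) →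
          b * f ⟨i, hi⟩ ∈ K f i ⊔ Ideal.span {f ⟨i, hi⟩} * II f ^ (s + 1) := by
        intro t
        induction t with
        | zero => intro h0; exact absurd h0 (Nat.not_lt_zero i)
        | succ t iht =>
          intro hit htn hC
          have htn' : t < n := Nat.lt_of_succ_le htn
          have habsorb : K f (t + 1) * II f ^ (s + 1)
              = K f t * II f ^ (s + 1) + Ideal.span {f ⟨t, htn'⟩} * II f ^ (s + 1) := by
            rw [K_succ f t htn', add_mul]
          rw [habsorb, Ideal.add_eq_sup, ← sup_assoc] at hC
          obtain ⟨y, hy, r, hr, hyr⟩ := Submodule.mem_sup.mp hC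
          obtain ⟨c, hc, hcr⟩ := Ideal.mem_span_singleton_mul.mp hr
          by_cases hit' : i < t
          · -- eliminate top generator f_t using hB
            have hyK : y ∈ K f t :=
              (sup_le (sup_le (K_mono f (le_of_lt hit'))
                  (Ideal.mul_le_left.trans (Ideal.span_le.mpr
                    (Set.singleton_subset_iff.mpr (mem_K f ⟨i, hi⟩ hit')))))
                Ideal.mul_le_left) hy
            have hcft : c * f ⟨t, htn'⟩ ∈ K f t := by
              have hceq : c * f ⟨t, htn'⟩ = b * f ⟨i, hi⟩ - y := by
                rw [mul_comm c, hcr]; exact (eq_sub_of_add_eq' hyr)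
              rw [hceq]
              exact sub_mem (Ideal.mul_mem_left _ b (mem_K f ⟨i, hi⟩ hit')) hyK
            have hcm : c ∈ K f t * II f ^ s := by
              rw [← hB t htn']
              exact Submodule.mem_inf.mpr ⟨Ideal.mem_colon_span_singleton.mpr hcft, hc⟩
            have hspant : Ideal.span {f ⟨t, htn'⟩} ≤ II f :=
              Ideal.span_le.mpr (Set.singleton_subset_iff.mpr
                (Ideal.subset_span (Set.mem_range_self _)))
            have hrK : r ∈ K f t * II f ^ (s + 1) := by
              rw [← hcr]
              have h1 : f ⟨t, htn'⟩ * c ∈ Ideal.span {f ⟨t, htn'⟩} * (K f t * II f ^ s) :=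
                Ideal.mul_mem_mul (Ideal.mem_span_singleton_self _) hcm
              have h2 : Ideal.span {f ⟨t, htn'⟩} * (K f t * II f ^ s)
                  ≤ K f t * II f ^ (s + 1) := by
                calc Ideal.span {f ⟨t, htn'⟩} * (K f t * II f ^ s)
                    = K f t * (Ideal.span {f ⟨t, htn'⟩} * II f ^ s) := mul_left_comm _ _ _
                  _ ≤ K f t * (II f * II f ^ s) :=
                      Ideal.mul_mono le_rfl (Ideal.mul_mono hspant le_rfl)
                  _ = K f t * II f ^ (s + 1) := by rw [← pow_succ']
              exact h2 h1
            apply iht hit' (Nat.le_of_succ_le htn)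
            rw [← hyr]
            exact Submodule.add_mem _ hy (Submodule.mem_sup_right hrK)
          · -- t = i
            have hti : t = i := by omega
            subst hti
            have hy' : y ∈ K f t ⊔ Ideal.span {f ⟨t, hi⟩} * II f ^ (s + 1) :=
              (sup_le le_rfl (Ideal.mul_le_left.trans le_sup_left) :
                (K f t ⊔ Ideal.span {f ⟨t, hi⟩} * II f ^ (s + 1)) ⊔ K f t * II f ^ (s + 1)
                  ≤ K f t ⊔ Ideal.span {f ⟨t, hi⟩} * II f ^ (s + 1)) hy
            rw [← hyr]
            exact Submodule.add_mem _ hy' (Submodule.mem_sup_right hr)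
      have hbase : b * f ⟨i, hi⟩ ∈ (K f i ⊔ Ideal.span {f ⟨i, hi⟩} * II f ^ (s + 1))
          ⊔ K f n * II f ^ (s + 1) := by
        have hpow : II f ^ (s + 1 + 1) ≤ K f n * II f ^ (s + 1) :=
          le_of_eq (by rw [K_top, ← pow_succ'])
        exact (sup_le (le_sup_left.trans le_sup_left) (hpow.trans le_sup_right)) hbf
      have hfin := elim n hi le_rfl hbase
      obtain ⟨j, hj, r, hr, hjr⟩ := Submodule.mem_sup.mp hfin
      obtain ⟨c, hc, hcr⟩ := Ideal.mem_span_singleton_mul.mp hr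
      have hbc : (b - c) * f ⟨i, hi⟩ ∈ K f i := by
        have h1 : c * f ⟨i, hi⟩ = r := by rw [mul_comm]; exact hcr
        have h2 : (b - c) * f ⟨i, hi⟩ = j := by
          rw [sub_mul, h1, ← hjr, add_sub_cancel_right]
        rw [h2]; exact hj
      rw [Ideal.add_eq_sup]
      have hx_eq : x = (a + (b - c)) + c := by rw [← hab]; ring
      rw [hx_eq]
      exact Submodule.add_mem _
        (Submodule.mem_sup_left (add_mem hac (Ideal.mem_colon_span_singleton.mpr hbc)))
        (Submodule.mem_sup_right hc)
    · rw [Ideal.add_eq_sup]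
      refine sup_le ?_ ?_
      · intro x hx
        refine Ideal.mem_colon_span_singleton.mpr ?_
        rw [Ideal.add_eq_sup]
        exact Submodule.mem_sup_left (Ideal.mem_colon_span_singleton.mp hx)
      · intro x hx
        refine Ideal.mem_colon_span_singleton.mpr ?_
        rw [Ideal.add_eq_sup]
        refine Submodule.mem_sup_right ?_
        rw [pow_succ]
        exact Ideal.mul_mem_mul hx (Ideal.subset_span (Set.mem_range_self _))

end DSeqAux2

/-- If `f 0, …, f (n-1)` is a d-sequence in a commutative ring `A` and `I = ⟨f_0,…,f_{n-1}⟩`,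
then for all `s ≥ 1` and all `i`,
`(⟨f_0,…,f_{i-1}⟩ + I ^ s : f_i) = (⟨f_0,…,f_{i-1}⟩ : f_i) + I ^ (s - 1)`. -/
theorem colon_add_pow_of_isDSequence {A : Type*} [CommRing A] {n : ℕ}
    (f : Fin n → A) (hf : IsDSequence f)
    (I : Ideal A) (hI : I = Ideal.span (Set.range f)) :
    ∀ s : ℕ, 1 ≤ s → ∀ i : Fin n,
      (Ideal.span (f '' {j | j < i}) + I ^ s).colon (Ideal.span {f i})
        = (Ideal.span (f '' {j | j < i})).colon (Ideal.span {f i}) + I ^ (s - 1) := by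
  intro s hs i
  obtain ⟨k, rfl⟩ : ∃ k, s = k + 1 := ⟨s - 1, (Nat.succ_pred_eq_of_pos hs).symm⟩
  simp only [Nat.add_sub_cancel]
  rw [hI, DSeqAux.J_eq f i]
  exact DSeqAux2.statA f hf k i.val i.isLt
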